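/- Let (Ω,ℱ) be a measurable space, 𝒳 a countable set with the discrete σ-algebra, X₀, X₁ : Ω → 𝒳 measurable, and P, R probability measures on Ω. Suppose there exists k : 𝒳×𝒳 → [0,∞) such that P(A) = ∫_A k(X₀,X₁) dR for every A ∈ ℱ. Then for every (x,y) ∈ 𝒳² with P₀₁(x,y) > 0 one has R₀₁(x,y) > 0 and P^{xy} = R^{xy}. -/

import Mathlib

open MeasureTheory ProbabilityTheory
open scoped NNReal ENNReal

/-- If `P = k(X₀, X₁)·R` for some nonnegative `k : 𝒳 × 𝒳 → [0,∞)`, then for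
every `(x,y)` with `P₀₁(x,y) > 0` one has `R₀₁(x,y) > 0` and the bridges coincide:
`P^{xy} = R^{xy}`. -/
theorem stmt15 {Ω : Type*} [MeasurableSpace Ω] {𝒳 : Type*} [MeasurableSpace 𝒳]
    [MeasurableSingletonClass 𝒳] [Countable 𝒳]
    (X₀ X₁ : Ω → 𝒳) (hX₀ : Measurable X₀) (hX₁ : Measurable X₁)
    (P R : Measure Ω) [IsProbabilityMeasure P] [IsProbabilityMeasure R]
    (k : 𝒳 → 𝒳 → ℝ≥0)
    (hk : ∀ A : Set Ω, MeasurableSet A →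
      P A = ∫⁻ ω, (k (X₀ ω) (X₁ ω) : ℝ≥0∞) ∂(R.restrict A)) :
    ∀ x y : 𝒳, 0 < P {ω | X₀ ω = x ∧ X₁ ω = y} →
      0 < R {ω | X₀ ω = x ∧ X₁ ω = y} ∧
      ProbabilityTheory.cond P {ω | X₀ ω = x ∧ X₁ ω = y} =
        ProbabilityTheory.cond R {ω | X₀ ω = x ∧ X₁ ω = y} := by
  intro x y hP
  set E : Set Ω := {ω | X₀ ω = x ∧ X₁ ω = y} with hE
  have hEmeas : MeasurableSet E := by
    have : E = X₀ ⁻¹' {x} ∩ X₁ ⁻¹' {y} := by ext ω; simp [hE]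
    rw [this]
    exact (hX₀ (measurableSet_singleton x)).inter (hX₁ (measurableSet_singleton y))
  -- key: P (A ∩ E) = k x y * R (A ∩ E)
  have key : ∀ A : Set Ω, MeasurableSet A →
      P (A ∩ E) = (k x y : ℝ≥0∞) * R (A ∩ E) := by
    intro A hA
    rw [hk _ (hA.inter hEmeas)]
    have : ∀ᵐ ω ∂(R.restrict (A ∩ E)),
        (k (X₀ ω) (X₁ ω) : ℝ≥0∞) = (k x y : ℝ≥0∞) := by
      refine (ae_restrict_iff' (hA.inter hEmeas)).2 (Filter.Eventually.of_forall ?_)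
      rintro ω ⟨-, hω1, hω2⟩
      rw [hω1, hω2]
    rw [lintegral_congr_ae this, lintegral_const, Measure.restrict_apply_univ]
  have hPE : P E = (k x y : ℝ≥0∞) * R E := by
    have := key Set.univ MeasurableSet.univ
    simpa using this
  have hk0 : (k x y : ℝ≥0∞) ≠ 0 := by
    intro h
    rw [h, zero_mul] at hPE
    exact hP.ne' hPE
  have hRE : 0 < R E := by
    by_contra h
    push_neg at h
    have : R E = 0 := le_antisymm h zero_le
    rw [this, mul_zero] at hPE
    exact hP.ne' hPE
  refine ⟨hRE, ?_⟩
  ext A hA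
  rw [ProbabilityTheory.cond_apply hEmeas, ProbabilityTheory.cond_apply hEmeas]
  have h1 : P (E ∩ A) = (k x y : ℝ≥0∞) * R (E ∩ A) := by
    rw [Set.inter_comm]; exact key A hA
  rw [h1, hPE, ENNReal.mul_inv (Or.inl hk0) (Or.inl ENNReal.coe_ne_top)]
  rw [mul_mul_mul_comm, ENNReal.inv_mul_cancel hk0 ENNReal.coe_ne_top, one_mul]
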